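/- Let R be a principal ideal semidomain and S a multiplicative subset of R. If A is a nonzero S-primary ideal of R, so that A = (v·pᵏ) with p irreducible, (p) ∩ S = ∅, (v) ∩ S ≠ ∅, and k ≥ 1, then the radical P = √A is an S-maximal ideal of R: P is disjoint from S, and for every ideal I of R with P ⊆ I, either there exists s ∈ S with sI ⊆ P, or I ∩ S ≠ ∅. -/
import Mathlib


/-- In a principal ideal semidomain, the radical of a nonzero S-primary ideal
`A = (v * pᵏ)` is an S-maximal ideal. -/
theorem radical_sPrimary_isSMaximal {R : Type*} [CommSemiring R] [Nontrivial R]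
    [NoZeroDivisors R]
    (hPIS : ∀ I : Ideal R, ∃ a : R, I = Ideal.span {a})
    (S : Set R) (hS1 : (1 : R) ∈ S) (hSmul : ∀ s ∈ S, ∀ t ∈ S, s * t ∈ S)
    (A : Ideal R) (hA : A ≠ ⊥)
    (hAS : Disjoint S (A : Set R))
    (hAprim : ∃ s ∈ S, ∀ a b : R, a * b ∈ A → s * a ∈ A ∨ s * b ∈ A.radical)
    (v p : R) (k : ℕ) (hk : 1 ≤ k) (hp0 : p ≠ 0) (hpirr : Irreducible p)
    (hpS : ((Ideal.span {p} : Ideal R) : Set R) ∩ S = ∅)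
    (hvS : (((Ideal.span {v} : Ideal R) : Set R) ∩ S).Nonempty)
    (hAeq : A = Ideal.span {v * p ^ k}) :
    Disjoint S ((A.radical : Set R)) ∧
    ∀ I : Ideal R, A.radical ≤ I →
      (∃ s ∈ S, ∀ x ∈ I, s * x ∈ A.radical) ∨ ((I : Set R) ∩ S).Nonempty := by
  obtain ⟨s, hsS, hs⟩ := hAprim
  have hpow : ∀ t ∈ S, ∀ n : ℕ, t ^ n ∈ S := by
    intro t ht n
    induction n with
    | zero => simpa using hS1
    | succ n ih => rw [pow_succ]; exact hSmul _ ih _ ht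
  have hdisj : Disjoint S ((A.radical : Set R)) := by
    rw [Set.disjoint_left]
    rintro t htS ⟨n, hn⟩
    exact (Set.disjoint_left.mp hAS) (hpow t htS n) hn
  refine ⟨hdisj, ?_⟩
  -- an element of S of the form c * v
  obtain ⟨x, hxv, hxS⟩ := hvS
  obtain ⟨c, hc⟩ := Ideal.mem_span_singleton'.mp hxv
  have hxpk : x * p ^ k ∈ A := by
    rw [hAeq, ← hc]
    exact Ideal.mem_span_singleton'.mpr ⟨c, by ring⟩
  -- s * p lies in the radical of A
  have hsp : s * p ∈ A.radical := by
    rcases hs x (p ^ k) hxpk with h | h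
    · exact absurd h (Set.disjoint_left.mp hAS (hSmul s hsS x hxS))
    · obtain ⟨n, hn⟩ := h
      refine ⟨k * n, ?_⟩
      have hexp : (s * p) ^ (k * n) = s ^ (k * n - n) * (s * p ^ k) ^ n := by
        have hle : n ≤ k * n := Nat.le_mul_of_pos_left n (by omega)
        rw [mul_pow, mul_pow, ← mul_assoc, ← pow_add, ← pow_mul]
        congr 2
        omega
      rw [hexp]
      exact Ideal.mul_mem_left _ _ hn
  intro I hPI
  obtain ⟨q, hq⟩ := hPIS I
  obtain ⟨d, hd⟩ := hPIS (Ideal.span {p, q})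
  have hpd : p ∈ Ideal.span {d} := hd ▸ Ideal.subset_span (by simp)
  obtain ⟨α, hα⟩ := Ideal.mem_span_singleton'.mp hpd
  rcases hpirr.isUnit_or_isUnit hα.symm with hu | hu
  · -- α is a unit, so q ∈ span {p} : left case
    left
    refine ⟨s, hsS, ?_⟩
    obtain ⟨u, hu'⟩ := hu
    have hdp : d ∈ Ideal.span {p} :=
      Ideal.mem_span_singleton'.mpr ⟨(↑u⁻¹ : Rˣ), by
        rw [← hα, ← hu', ← mul_assoc, Units.inv_mul, one_mul]⟩
    have hqp : q ∈ Ideal.span {p} := by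
      have hq' : q ∈ Ideal.span {d} := hd ▸ Ideal.subset_span (by simp)
      obtain ⟨t, ht⟩ := Ideal.mem_span_singleton'.mp hq'
      obtain ⟨w, hw⟩ := Ideal.mem_span_singleton'.mp hdp
      exact Ideal.mem_span_singleton'.mpr ⟨t * w, by rw [← ht, ← hw]; ring⟩
    obtain ⟨t, ht⟩ := Ideal.mem_span_singleton'.mp hqp
    intro y hy
    rw [hq] at hy
    obtain ⟨z, hz⟩ := Ideal.mem_span_singleton'.mp hy
    have : s * y = (z * t) * (s * p) := by rw [← hz, ← ht]; ring
    rw [this]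
    exact Ideal.mul_mem_left _ _ hsp
  · -- d is a unit, so span {p, q} = ⊤ and s ∈ I ∩ S
    right
    have htop : Ideal.span ({p, q} : Set R) = ⊤ := by
      rw [hd, Ideal.span_singleton_eq_top]
      exact hu
    have h1 : (1 : R) ∈ Ideal.span ({p, q} : Set R) := htop ▸ Submodule.mem_top
    obtain ⟨e, f, hef⟩ := Ideal.mem_span_pair.mp h1
    have hspI : s * p ∈ I := hPI hsp
    rw [hq] at hspI
    obtain ⟨m, hm⟩ := Ideal.mem_span_singleton'.mp hspI
    have hsq : s ∈ Ideal.span {q} := by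
      refine Ideal.mem_span_singleton'.mpr ⟨e * m + s * f, ?_⟩
      calc (e * m + s * f) * q = e * (m * q) + s * (f * q) := by ring
        _ = e * (s * p) + s * (f * q) := by rw [hm]
        _ = s * (e * p + f * q) := by ring
        _ = s := by rw [hef, mul_one]
    exact ⟨s, by rw [hq]; exact hsq, hsS⟩
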